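/- Let H ∈ (1/2, 1). There exists a constant C_H > 0, depending only on H, such that for every integer n ≥ 1: ∫₀¹ ∫₀ᵗ s^n t^n (1−s)^H (t−s)^{2H−2} ds dt ≤ C_H · n^{−3H}. -/

import Mathlib

open MeasureTheory

lemma aux_pow_mul_rpow_le {H : ℝ} (hH0 : 0 < H) (hH1 : H ≤ 1) (k : ℕ) (hk : 1 ≤ k)
    {x : ℝ} (hx0 : 0 ≤ x) (hx1 : x ≤ 1) :
    x ^ k * (1 - x) ^ H ≤ (k : ℝ) ^ (-H) := by
  have hk0 : (0:ℝ) < k := by exact_mod_cast hk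
  set y : ℝ := (k : ℝ) * (1 - x) with hy
  have hy0 : 0 ≤ y := mul_nonneg hk0.le (by linarith)
  have hxe : x ≤ Real.exp (x - 1) := by
    have := Real.add_one_le_exp (x - 1); linarith
  have h1 : x ^ k ≤ Real.exp (-y) := by
    calc x ^ k ≤ (Real.exp (x - 1)) ^ k := pow_le_pow_left₀ hx0 hxe k
    _ = Real.exp ((k:ℝ) * (x - 1)) := by rw [← Real.exp_nat_mul]
    _ = Real.exp (-y) := by rw [hy]; ring_nf
  have h2 : y ^ H ≤ Real.exp y := by
    rcases le_or_gt y 1 with h | h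
    · exact (Real.rpow_le_one hy0 h hH0.le).trans (Real.one_le_exp hy0)
    · calc y ^ H ≤ y ^ (1:ℝ) := Real.rpow_le_rpow_of_exponent_le h.le hH1
      _ = y := Real.rpow_one y
      _ ≤ Real.exp y := by have := Real.add_one_le_exp y; linarith
  have h3 : (1 - x) ^ H = y ^ H * (k:ℝ) ^ (-H) := by
    have : (1 - x) = y / (k:ℝ) := by field_simp [hy]; rw [hy]; ring
    rw [this, Real.div_rpow hy0 hk0.le, Real.rpow_neg hk0.le, div_eq_mul_inv]
  calc x ^ k * (1 - x) ^ H ≤ Real.exp (-y) * (y ^ H * (k:ℝ) ^ (-H)) := by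
        rw [h3]; exact mul_le_mul_of_nonneg_right h1
          (mul_nonneg (Real.rpow_nonneg hy0 _) (Real.rpow_nonneg hk0.le _))
    _ ≤ Real.exp (-y) * (Real.exp y * (k:ℝ) ^ (-H)) := by
        have := mul_le_mul_of_nonneg_right h2 (Real.rpow_nonneg hk0.le (-H))
        exact mul_le_mul_of_nonneg_left this (Real.exp_nonneg _)
    _ = (k:ℝ) ^ (-H) := by rw [← mul_assoc, ← Real.exp_add]; simp

lemma aux_integrableOn_rpow_sub {a t c : ℝ} (ha : -1 < a) (hct : c < t) :
    IntegrableOn (fun s => (t - s) ^ a) (Set.Ioo c t) := by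
  have h0 : IntervalIntegrable (fun x : ℝ => x ^ a) volume 0 (t - c) :=
    intervalIntegral.intervalIntegrable_rpow' ha
  have h1 := h0.comp_sub_left t
  simp only [sub_zero, sub_sub_cancel] at h1
  exact (intervalIntegrable_iff_integrableOn_Ioo_of_le hct.le).mp h1.symm

lemma aux_integral_rpow_sub {a t c : ℝ} (ha : -1 < a) (hct : c < t) :
    ∫ s in Set.Ioo c t, (t - s) ^ a = (t - c) ^ (a + 1) / (a + 1) := by
  have ha1 : 0 < a + 1 := by linarith
  rw [← integral_Ioc_eq_integral_Ioo, ← intervalIntegral.integral_of_le hct.le]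
  rw [show (fun s => (t - s) ^ a) = fun s => ((fun x : ℝ => x ^ a) (t - s)) from rfl]
  rw [intervalIntegral.integral_comp_sub_left (fun x : ℝ => x ^ a) t]
  simp only [sub_self, sub_sub_cancel]
  rw [integral_rpow (Or.inl ha), Real.zero_rpow (by linarith)]
  ring

lemma aux_integral_pow_Ioo (m : ℕ) {t : ℝ} (ht : 0 < t) :
    ∫ s in Set.Ioo 0 t, s ^ m = t ^ (m + 1) / (m + 1) := by
  rw [← integral_Ioc_eq_integral_Ioo, ← intervalIntegral.integral_of_le ht.le,
    integral_pow]
  simp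

lemma aux_inner_bound {H : ℝ} (hH : H ∈ Set.Ioo (1 / 2 : ℝ) 1)
    (n k m : ℕ) (hk : 1 ≤ k) (hkm : k + m = n) (hn : 1 ≤ n)
    {t : ℝ} (ht : t ∈ Set.Ioo (0:ℝ) 1) :
    (∫ s in Set.Ioo (0 : ℝ) t, s ^ n * t ^ n * (1 - s) ^ H * (t - s) ^ (2 * H - 2))
      ≤ t ^ n * ((k:ℝ) ^ (-H) *
        ((n:ℝ) ^ (2 - 2*H) * (1/((m:ℝ)+1)) + (n:ℝ) ^ (1 - 2*H) / (2*H - 1))) := by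
  obtain ⟨hH1, hH2⟩ := hH
  obtain ⟨ht0, ht1⟩ := ht
  have ha : (-1 : ℝ) < 2 * H - 2 := by linarith
  have ha0 : 2 * H - 2 ≤ 0 := by linarith
  have hn0 : (0:ℝ) < n := by exact_mod_cast hn
  have hinvn : (0:ℝ) < 1 / n := by positivity
  have hct : t - 1/(n:ℝ) < t := by linarith
  set E : Set ℝ := Set.Ioo (t - 1/(n:ℝ)) t with hE
  set g : ℝ → ℝ := fun s => t ^ n * ((k:ℝ) ^ (-H) *
      ((n:ℝ) ^ (2 - 2*H) * s ^ m + E.indicator (fun s => (t - s) ^ (2*H-2)) s)) with hg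
  have hIrpow : IntegrableOn (fun s => (t - s) ^ (2*H-2)) E := aux_integrableOn_rpow_sub ha hct
  have hind : Integrable (E.indicator (fun s => (t - s) ^ (2*H-2))) :=
    hIrpow.integrable_indicator measurableSet_Ioo
  have hIm : IntegrableOn (fun s : ℝ => s ^ m) (Set.Ioo 0 t) :=
    (intervalIntegrable_iff_integrableOn_Ioo_of_le ht0.le).mp
      (intervalIntegral.intervalIntegrable_pow m)
  have hIg : IntegrableOn g (Set.Ioo 0 t) := by
    apply Integrable.const_mul
    apply Integrable.const_mul
    exact (hIm.const_mul _).add (hind.integrableOn)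
  have hfg : ∀ s ∈ Set.Ioo (0:ℝ) t,
      s ^ n * t ^ n * (1 - s) ^ H * (t - s) ^ (2 * H - 2) ≤ g s := by
    intro s hs
    obtain ⟨hs0, hst⟩ := hs
    have hs1 : s ≤ 1 := by linarith
    have hAs : s ^ k * (1 - s) ^ H ≤ (k:ℝ) ^ (-H) :=
      aux_pow_mul_rpow_le (by linarith) hH2.le k hk hs0.le hs1
    have hts0 : 0 ≤ t - s := by linarith
    have hsm : (0:ℝ) ≤ s ^ m := pow_nonneg hs0.le m
    have hmain : s ^ m * (t - s) ^ (2*H-2) ≤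
        (n:ℝ) ^ (2 - 2*H) * s ^ m + E.indicator (fun s => (t - s) ^ (2*H-2)) s := by
      rcases le_or_gt (1/(n:ℝ)) (t - s) with h | h
      · have h1 : (t - s) ^ (2*H-2) ≤ (1/(n:ℝ)) ^ (2*H-2) :=
          Real.rpow_le_rpow_of_nonpos hinvn h ha0
        have h2 : (1/(n:ℝ)) ^ (2*H-2) = (n:ℝ) ^ (2 - 2*H) := by
          rw [one_div, Real.inv_rpow hn0.le, ← Real.rpow_neg hn0.le]
          congr 1; ring
        have hindnn : 0 ≤ E.indicator (fun s => (t - s) ^ (2*H-2)) s := by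
          apply Set.indicator_nonneg
          intro x hx
          exact Real.rpow_nonneg (by linarith [hx.2]) _
        calc s ^ m * (t - s) ^ (2*H-2) ≤ s ^ m * ((n:ℝ) ^ (2 - 2*H)) := by
              rw [h2] at h1; exact mul_le_mul_of_nonneg_left h1 hsm
          _ ≤ (n:ℝ) ^ (2 - 2*H) * s ^ m + E.indicator (fun s => (t - s) ^ (2*H-2)) s := by
              rw [mul_comm]; linarith
      · have hsE : s ∈ E := ⟨by linarith, hst⟩
        rw [Set.indicator_of_mem hsE]
        have h1 : s ^ m * (t - s) ^ (2*H-2) ≤ (t - s) ^ (2*H-2) := by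
          have := Real.rpow_nonneg hts0 (2*H-2)
          nlinarith [pow_le_one₀ hs0.le hs1 (n := m)]
        have h2 : (0:ℝ) ≤ (n:ℝ) ^ (2 - 2*H) * s ^ m :=
          mul_nonneg (Real.rpow_nonneg hn0.le _) hsm
        linarith
    have heq : s ^ n * t ^ n * (1 - s) ^ H * (t - s) ^ (2 * H - 2)
        = t ^ n * ((s ^ k * (1 - s) ^ H) * (s ^ m * (t - s) ^ (2*H-2))) := by
      rw [← hkm, pow_add]; ring
    rw [heq, hg]
    have htn : (0:ℝ) ≤ t ^ n := pow_nonneg ht0.le n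
    apply mul_le_mul_of_nonneg_left _ htn
    calc (s ^ k * (1 - s) ^ H) * (s ^ m * (t - s) ^ (2*H-2))
        ≤ (k:ℝ) ^ (-H) * (s ^ m * (t - s) ^ (2*H-2)) := by
          apply mul_le_mul_of_nonneg_right hAs
          exact mul_nonneg hsm (Real.rpow_nonneg hts0 _)
      _ ≤ (k:ℝ) ^ (-H) *
          ((n:ℝ) ^ (2 - 2*H) * s ^ m + E.indicator (fun s => (t - s) ^ (2*H-2)) s) := by
          exact mul_le_mul_of_nonneg_left hmain (Real.rpow_nonneg (by positivity) _)
  have hnn : ∀ᵐ s ∂(volume.restrict (Set.Ioo (0:ℝ) t)),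
      0 ≤ s ^ n * t ^ n * (1 - s) ^ H * (t - s) ^ (2 * H - 2) := by
    filter_upwards [ae_restrict_mem measurableSet_Ioo] with s hs
    obtain ⟨hs0, hst⟩ := hs
    have h1 : 0 ≤ (1 - s) ^ H := Real.rpow_nonneg (by linarith) _
    have h2 : 0 ≤ (t - s) ^ (2*H-2) := Real.rpow_nonneg (by linarith) _
    positivity
  have step1 := integral_mono_of_nonneg hnn hIg
    (by filter_upwards [ae_restrict_mem measurableSet_Ioo] with s hs using hfg s hs)
  refine step1.trans ?_
  -- compute/bound ∫ g
  have hsplit : ∫ s in Set.Ioo (0:ℝ) t, g s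
      = t ^ n * ((k:ℝ) ^ (-H) *
        ((n:ℝ) ^ (2 - 2*H) * (∫ s in Set.Ioo (0:ℝ) t, s ^ m)
          + ∫ s in Set.Ioo (0:ℝ) t, E.indicator (fun s => (t - s) ^ (2*H-2)) s)) := by
    rw [hg]
    rw [integral_const_mul, integral_const_mul,
      integral_add (hIm.const_mul _) hind.integrableOn, integral_const_mul]
  rw [hsplit]
  have hm1 : ∫ s in Set.Ioo (0:ℝ) t, s ^ m ≤ 1/((m:ℝ)+1) := by
    rw [aux_integral_pow_Ioo m ht0]
    have h1 : t ^ (m+1) ≤ 1 := pow_le_one₀ ht0.le ht1.le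
    have h2 : (0:ℝ) < (m:ℝ)+1 := by positivity
    rw [div_le_div_iff₀ h2 h2]
    nlinarith
  have hm2 : ∫ s in Set.Ioo (0:ℝ) t, E.indicator (fun s => (t - s) ^ (2*H-2)) s
      ≤ (n:ℝ) ^ (1 - 2*H) / (2*H - 1) := by
    rw [setIntegral_indicator measurableSet_Ioo]
    have hsub : Set.Ioo (0:ℝ) t ∩ E ⊆ E := Set.inter_subset_right
    have hnnE : 0 ≤ᵐ[volume.restrict E] (fun s => (t - s) ^ (2*H-2)) := by
      filter_upwards [ae_restrict_mem measurableSet_Ioo] with s hs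
      exact Real.rpow_nonneg (by linarith [hs.2]) _
    have h1 : ∫ s in Set.Ioo (0:ℝ) t ∩ E, (t - s) ^ (2*H-2)
        ≤ ∫ s in E, (t - s) ^ (2*H-2) := setIntegral_mono_set hIrpow hnnE
          (HasSubset.Subset.eventuallyLE hsub)
    refine h1.trans ?_
    rw [aux_integral_rpow_sub ha hct]
    have : t - (t - 1/(n:ℝ)) = 1/(n:ℝ) := by ring
    rw [this, show (2*H - 2 + 1) = 2*H - 1 by ring]
    have h2 : (1/(n:ℝ)) ^ (2*H - 1) = (n:ℝ) ^ (1 - 2*H) := by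
      rw [one_div, Real.inv_rpow hn0.le, ← Real.rpow_neg hn0.le]
      congr 1; ring
    rw [h2]
  have hc1 : (0:ℝ) ≤ t ^ n := pow_nonneg ht0.le n
  have hc2 : (0:ℝ) ≤ (k:ℝ) ^ (-H) := Real.rpow_nonneg (by positivity) _
  have hc3 : (0:ℝ) ≤ (n:ℝ) ^ (2 - 2*H) := Real.rpow_nonneg hn0.le _
  apply mul_le_mul_of_nonneg_left _ hc1
  apply mul_le_mul_of_nonneg_left _ hc2
  exact add_le_add (mul_le_mul_of_nonneg_left hm1 hc3) hm2

theorem weighted_double_integral_rate (H : ℝ) (hH : H ∈ Set.Ioo (1 / 2 : ℝ) 1) :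
    ∃ C : ℝ, 0 < C ∧ ∀ n : ℕ, 1 ≤ n →
      (∫ t in Set.Ioo (0 : ℝ) 1, ∫ s in Set.Ioo (0 : ℝ) t,
          s ^ n * t ^ n * (1 - s) ^ H * (t - s) ^ (2 * H - 2))
        ≤ C * (n : ℝ) ^ (-(3 * H)) := by
  obtain ⟨hH1, hH2⟩ := hH
  have h2H1 : (0:ℝ) < 2 * H - 1 := by linarith
  refine ⟨(2:ℝ) ^ H * (2 + 1/(2*H-1)), by positivity, ?_⟩
  set C : ℝ := (2:ℝ) ^ H * (2 + 1/(2*H-1)) with hCdef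
  intro n hn
  set m : ℕ := n / 2 with hm
  set k : ℕ := n - n / 2 with hkdef
  have hk : 1 ≤ k := by omega
  have hkm : k + m = n := by omega
  have hn0 : (0:ℝ) < n := by exact_mod_cast hn
  have hk0 : (0:ℝ) < k := by exact_mod_cast hk
  set B : ℝ := (k:ℝ) ^ (-H) *
      ((n:ℝ) ^ (2 - 2*H) * (1/((m:ℝ)+1)) + (n:ℝ) ^ (1 - 2*H) / (2*H - 1)) with hBdef
  have hBnn : 0 ≤ B := by
    apply mul_nonneg (Real.rpow_nonneg hk0.le _)
    apply add_nonneg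
    · exact mul_nonneg (Real.rpow_nonneg hn0.le _) (by positivity)
    · exact div_nonneg (Real.rpow_nonneg hn0.le _) h2H1.le
  -- outer integral bound
  have hFnn : ∀ᵐ t ∂(volume.restrict (Set.Ioo (0:ℝ) 1)),
      0 ≤ ∫ s in Set.Ioo (0 : ℝ) t, s ^ n * t ^ n * (1 - s) ^ H * (t - s) ^ (2 * H - 2) := by
    filter_upwards [ae_restrict_mem measurableSet_Ioo] with t ht
    apply setIntegral_nonneg measurableSet_Ioo
    intro s hs
    have h1 : 0 ≤ (1 - s) ^ H := Real.rpow_nonneg (by linarith [hs.2, ht.2]) _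
    have h2 : 0 ≤ (t - s) ^ (2*H-2) := Real.rpow_nonneg (by linarith [hs.2]) _
    exact mul_nonneg (mul_nonneg (mul_nonneg (pow_nonneg hs.1.le n)
      (pow_nonneg ht.1.le n)) h1) h2
  have hIg : IntegrableOn (fun t : ℝ => t ^ n * B) (Set.Ioo (0:ℝ) 1) := by
    refine (intervalIntegrable_iff_integrableOn_Ioo_of_le zero_le_one).mp ?_
    exact (intervalIntegral.intervalIntegrable_pow n).mul_const B
  have step1 : (∫ t in Set.Ioo (0 : ℝ) 1, ∫ s in Set.Ioo (0 : ℝ) t,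
          s ^ n * t ^ n * (1 - s) ^ H * (t - s) ^ (2 * H - 2))
      ≤ ∫ t in Set.Ioo (0:ℝ) 1, t ^ n * B := by
    apply integral_mono_of_nonneg hFnn hIg
    filter_upwards [ae_restrict_mem measurableSet_Ioo] with t ht
    exact aux_inner_bound ⟨hH1, hH2⟩ n k m hk hkm hn ht
  have step2 : ∫ t in Set.Ioo (0:ℝ) 1, t ^ n * B = (1/((n:ℝ)+1)) * B := by
    rw [integral_mul_const, aux_integral_pow_Ioo n one_pos]
    norm_num
  -- arithmetic
  have hkn : (n:ℝ) / 2 ≤ (k:ℝ) := by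
    have : n ≤ 2 * k := by omega
    have : (n:ℝ) ≤ 2 * (k:ℝ) := by exact_mod_cast this
    linarith
  have h1 : (k:ℝ) ^ (-H) ≤ (2:ℝ) ^ H * (n:ℝ) ^ (-H) := by
    have ha : (k:ℝ) ^ (-H) ≤ ((n:ℝ)/2) ^ (-H) :=
      Real.rpow_le_rpow_of_nonpos (by positivity) hkn (by linarith)
    have hb : ((n:ℝ)/2) ^ (-H) = (2:ℝ) ^ H * (n:ℝ) ^ (-H) := by
      rw [Real.div_rpow hn0.le (by norm_num), Real.rpow_neg (by norm_num : (0:ℝ) ≤ 2),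
        div_eq_mul_inv, inv_inv, mul_comm]
    linarith
  have h2 : (n:ℝ) ^ (2 - 2*H) * (1/((m:ℝ)+1)) ≤ 2 * (n:ℝ) ^ (1 - 2*H) := by
    have hmn : (n:ℝ) ≤ 2 * ((m:ℝ)+1) := by
      have : n ≤ 2 * (m + 1) := by omega
      have := (Nat.cast_le (α := ℝ)).mpr this
      push_cast at this
      linarith
    have hd : 1/((m:ℝ)+1) ≤ 2/(n:ℝ) := by
      rw [div_le_div_iff₀ (by positivity) hn0]
      linarith
    have he : (n:ℝ) ^ (2 - 2*H) * (2/(n:ℝ)) = 2 * (n:ℝ) ^ (1 - 2*H) := by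
      rw [show (2 - 2*H) = (1 - 2*H) + 1 by ring, Real.rpow_add hn0, Real.rpow_one]
      field_simp
    calc (n:ℝ) ^ (2 - 2*H) * (1/((m:ℝ)+1)) ≤ (n:ℝ) ^ (2 - 2*H) * (2/(n:ℝ)) :=
          mul_le_mul_of_nonneg_left hd (Real.rpow_nonneg hn0.le _)
      _ = 2 * (n:ℝ) ^ (1 - 2*H) := he
  have hB : B ≤ C * (n:ℝ) ^ (1 - 3*H) := by
    have hsum : (n:ℝ) ^ (2 - 2*H) * (1/((m:ℝ)+1)) + (n:ℝ) ^ (1 - 2*H) / (2*H - 1)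
        ≤ (2 + 1/(2*H-1)) * (n:ℝ) ^ (1 - 2*H) := by
      have : (n:ℝ) ^ (1 - 2*H) / (2*H - 1) = (1/(2*H-1)) * (n:ℝ) ^ (1 - 2*H) := by ring
      rw [this]
      linarith [h2]
    have hsum' : (0:ℝ) ≤ (n:ℝ) ^ (2 - 2*H) * (1/((m:ℝ)+1)) + (n:ℝ) ^ (1 - 2*H) / (2*H - 1) := by
      apply add_nonneg
      · exact mul_nonneg (Real.rpow_nonneg hn0.le _) (by positivity)
      · exact div_nonneg (Real.rpow_nonneg hn0.le _) h2H1.le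
    calc B ≤ ((2:ℝ) ^ H * (n:ℝ) ^ (-H)) * ((2 + 1/(2*H-1)) * (n:ℝ) ^ (1 - 2*H)) := by
          apply mul_le_mul h1 hsum hsum'
          positivity
      _ = C * ((n:ℝ) ^ (-H) * (n:ℝ) ^ (1 - 2*H)) := by rw [hCdef]; ring
      _ = C * (n:ℝ) ^ (1 - 3*H) := by
          rw [← Real.rpow_add hn0]
          congr 2
          ring
  calc (∫ t in Set.Ioo (0 : ℝ) 1, ∫ s in Set.Ioo (0 : ℝ) t,
          s ^ n * t ^ n * (1 - s) ^ H * (t - s) ^ (2 * H - 2))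
      ≤ (1/((n:ℝ)+1)) * B := by rw [← step2]; exact step1
    _ ≤ (1/(n:ℝ)) * B := by
        apply mul_le_mul_of_nonneg_right _ hBnn
        rw [div_le_div_iff₀ (by positivity) hn0]
        linarith
    _ ≤ (1/(n:ℝ)) * (C * (n:ℝ) ^ (1 - 3*H)) := by
        apply mul_le_mul_of_nonneg_left hB (by positivity)
    _ = C * (n:ℝ) ^ (-(3*H)) := by
        rw [show -(3*H) = (1 - 3*H) + (-1) by ring, Real.rpow_add hn0,
          Real.rpow_neg_one]
        ring
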